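/- Let λ be an n-partition, σ an n-permutation, and T a semistandard tableau of shape λ. Then M(T) ≥ Y_λ(σ) (entrywise) if and only if T(l,k) ∈ F_λ(T,σ;l,k) for every box (l,k) of λ. -/

import Mathlib

/-
Common combinatorial set-up for "Tableaux for Key Polynomials, Demazure
Characters, and Atoms" (Proctor–Willis).

Conventions: a box `(j, i)` means column `j`, row `i`, both 1-indexed.
Partial (remnant) tableaux are encoded by their column-length functions
`c : ℕ → ℕ` (each column of a remnant is a top segment of the original
column), together with the ambient value function `T : ℕ → ℕ → ℕ`.
-/

open scoped BigOperators Classical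

noncomputable section

namespace KeyPoly

open MvPolynomial

/-- An `n`-partition `λ = (λ_1, …, λ_n)` with `λ_1 ≥ … ≥ λ_n ≥ 0`,
recorded as a function on `1, …, n`, vanishing beyond `n`. -/
structure NPartition (n : ℕ) where
  part : ℕ → ℕ
  antitone : ∀ ⦃i j : ℕ⦄, 1 ≤ i → i ≤ j → part j ≤ part i
  outside : ∀ i : ℕ, n < i → part i = 0

variable {n : ℕ}

/-- The column length `ζ_j` of the Young diagram of `λ`. -/
def zeta (lam : NPartition n) (j : ℕ) : ℕ :=
  ((Finset.Icc 1 n).filter fun i => j ≤ lam.part i).card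

/-- The box `(j,i)` (column `j`, row `i`) belongs to the diagram of `λ`. -/
def InShape (lam : NPartition n) (j i : ℕ) : Prop :=
  1 ≤ j ∧ 1 ≤ i ∧ i ≤ n ∧ j ≤ lam.part i

/-- The boxes of the diagram of `λ`, as a finite set of pairs (column, row). -/
def boxes (lam : NPartition n) : Finset (ℕ × ℕ) :=
  (Finset.Icc 1 (lam.part 1) ×ˢ Finset.Icc 1 n).filter fun b => b.1 ≤ lam.part b.2

/-- `T` is a semistandard tableau of shape `λ` with values in `[1,n]`:
rows weakly increase eastward, columns strictly increase southward. -/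
def IsSSYT (lam : NPartition n) (T : ℕ → ℕ → ℕ) : Prop :=
  (∀ j i, InShape lam j i → 1 ≤ T j i ∧ T j i ≤ n) ∧
  (∀ j i, InShape lam (j + 1) i → T j i ≤ T (j + 1) i) ∧
  (∀ j i, InShape lam j (i + 1) → T j i < T j (i + 1))

/-- Normalization: the filling vanishes outside the shape. -/
def ZeroOutside (lam : NPartition n) (T : ℕ → ℕ → ℕ) : Prop :=
  ∀ j i, ¬ InShape lam j i → T j i = 0

/-- `T(l, k+1)`, with the boundary convention `n+1` when `k = ζ_l`. -/
def south (lam : NPartition n) (T : ℕ → ℕ → ℕ) (l k : ℕ) : ℕ :=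
  if InShape lam l (k + 1) then T l (k + 1) else n + 1

/-- `T(l+1, k)`, with the boundary convention `n` when `l = λ_k`. -/
def east (lam : NPartition n) (T : ℕ → ℕ → ℕ) (l k : ℕ) : ℕ :=
  if InShape lam (l + 1) k then T (l + 1) k else n

/-- An `n`-permutation: a tuple `(p 1, …, p n)` of distinct entries from `[1,n]`. -/
def IsNPerm (n : ℕ) (p : ℕ → ℕ) : Prop :=
  Set.BijOn p (Set.Icc 1 n) (Set.Icc 1 n)

/-- The `λ`-key `Y_λ(π)`: column `j` is `π_1, …, π_{ζ_j}` sorted increasingly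
(from top to bottom); zero outside the shape. -/
def keyTab (lam : NPartition n) (p : ℕ → ℕ) (j i : ℕ) : ℕ :=
  if InShape lam j i then
    (((Finset.Icc 1 (zeta lam j)).image p).sort (· ≤ ·)).getD (i - 1) 0
  else 0

/-- A semistandard `T` is a key if the values of each column contain the
values of every column to its east. -/
def colSet (lam : NPartition n) (T : ℕ → ℕ → ℕ) (j : ℕ) : Finset ℕ :=
  (Finset.Icc 1 (zeta lam j)).image (T j)

def IsKey (lam : NPartition n) (T : ℕ → ℕ → ℕ) : Prop :=
  ∀ j j' : ℕ, 1 ≤ j → j ≤ j' → j' ≤ lam.part 1 → colSet lam T j' ⊆ colSet lam T j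

/-! ### The (right) scanning method -/

/-- The next column of the scanning path: the earliest column `h' > h`
(up to `maxCol`) whose column bottom in the remnant `c` is nonempty and has
value weakly larger than the bottom value of column `h`. -/
def nextCol (T : ℕ → ℕ → ℕ) (c : ℕ → ℕ) (maxCol h : ℕ) : Option ℕ :=
  (List.range' (h + 1) (maxCol - h)).find?
    (fun h' => decide (0 < c h' ∧ T h (c h) ≤ T h' (c h')))

/-- Columns of the scanning path (EWIS of column bottoms) starting at column `h`,
with explicit fuel. -/
def pathColsAux (T : ℕ → ℕ → ℕ) (c : ℕ → ℕ) (maxCol : ℕ) : ℕ → ℕ → List ℕ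
  | 0, h => [h]
  | fuel + 1, h =>
    match nextCol T c maxCol h with
    | none => [h]
    | some h' => h :: pathColsAux T c maxCol fuel h'

/-- Columns of the scanning path starting at the bottom of column `j` of the
remnant with column lengths `c`. -/
def pathCols (T : ℕ → ℕ → ℕ) (c : ℕ → ℕ) (maxCol j : ℕ) : List ℕ :=
  pathColsAux T c maxCol maxCol j

/-- Remove the scanning path starting in column `j` from the remnant `c`. -/
def removePath (T : ℕ → ℕ → ℕ) (c : ℕ → ℕ) (maxCol j : ℕ) : ℕ → ℕ :=
  fun h => if h ∈ pathCols T c maxCol j then c h - 1 else c h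

/-- Iterate path removal `r` times, always starting from column `j`. -/
def remnantIter (T : ℕ → ℕ → ℕ) (c0 : ℕ → ℕ) (maxCol j : ℕ) : ℕ → ℕ → ℕ
  | 0 => c0
  | r + 1 => removePath T (remnantIter T c0 maxCol j r) maxCol j

/-- Column lengths of the remnant tableau `T^{(j;i)}`. -/
def remnant (lam : NPartition n) (T : ℕ → ℕ → ℕ) (j i : ℕ) : ℕ → ℕ :=
  remnantIter T (zeta lam) (lam.part 1) j (zeta lam j - i)

/-- The scanning path `P(T; j, i)`, recorded by its list of columns. -/
def scanPath (lam : NPartition n) (T : ℕ → ℕ → ℕ) (j i : ℕ) : List ℕ :=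
  pathCols T (remnant lam T j i) (lam.part 1) j

/-- The scanning value `S(T; j, i)`: the last value of the EWIS from `(j,i)`. -/
def scanValue (lam : NPartition n) (T : ℕ → ℕ → ℕ) (j i : ℕ) : ℕ :=
  T ((scanPath lam T j i).getLastD j)
    (remnant lam T j i ((scanPath lam T j i).getLastD j))

/-- The box `(l,k)` lies on the scanning path `P(T; j, i)`. -/
def InScanPath (lam : NPartition n) (T : ℕ → ℕ → ℕ) (j i l k : ℕ) : Prop :=
  l ∈ scanPath lam T j i ∧ k = remnant lam T j i l

/-- `m(U)` where `U` is the remnant with column lengths `c` restricted to the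
columns `l+1, …, maxCol`:  the maximum of the column-bottom values, with the
convention `m((())) = 1` for the empty tableau. -/
def mEast (T : ℕ → ℕ → ℕ) (c : ℕ → ℕ) (maxCol l : ℕ) : ℕ :=
  max 1 (((Finset.Icc (l + 1) maxCol).filter fun h => 0 < c h).sup fun h => T h (c h))

/-! ### The condition sets A, C, and B -/

/-- The set `A_λ(T, π; l, k)`. -/
def Aset (lam : NPartition n) (T : ℕ → ℕ → ℕ) (p : ℕ → ℕ) (l k : ℕ) : Set ℕ :=
  if keyTab lam p l k < mEast T (remnant lam T l k) (lam.part 1) l then (∅ : Set ℕ)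
  else Set.Icc k (min (keyTab lam p l k) (min (south lam T l k - 1) (east lam T l k)))

/-- The set `C_λ(T, π; l, k)`. -/
def Cset (lam : NPartition n) (T : ℕ → ℕ → ℕ) (p : ℕ → ℕ) (l k : ℕ) : Set ℕ :=
  if l = lam.part 1 then {keyTab lam p l k}
  else if keyTab lam p l k < mEast T (remnant lam T l k) (lam.part 1) l then (∅ : Set ℕ)
  else if mEast T (remnant lam T l k) (lam.part 1) l = keyTab lam p l k then
    Set.Icc k (min (keyTab lam p l k) (min (south lam T l k - 1) (east lam T l k)))
  else {keyTab lam p l k} ∩ Set.Icc k (min (south lam T l k - 1) (east lam T l k))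

/-- The row index `a(l,k;j)`:  the `i` with `(l-1,k) ∈ P(T;j,i)`
(convention `a(l,k;l) = k`). -/
def aIdx (lam : NPartition n) (T : ℕ → ℕ → ℕ) (l k j : ℕ) : ℕ :=
  if j = l then k
  else ((Finset.Icc 1 (zeta lam j)).filter fun i => InScanPath lam T j i (l - 1) k).sup id

/-- The row index `b(l,k;j)`:  the `i` with `(l,k+1) ∈ P(T;j,i)` when `k < ζ_l`,
and `ζ_j + 1` when `k = ζ_l` (convention `b(l,k;l) = k+1`). -/
def bIdx (lam : NPartition n) (T : ℕ → ℕ → ℕ) (l k j : ℕ) : ℕ :=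
  if j = l then k + 1
  else if k = zeta lam l then zeta lam j + 1
  else ((Finset.Icc 1 (zeta lam j)).filter fun i => InScanPath lam T j i l (k + 1)).sup id

/-- `E(l,k;j,i)`:  the value of `T` at the box `(h,m)` of `P(T;j,i)` with `h < l`
maximal (convention `E(l,k;l,k) = k`). -/
def Epath (lam : NPartition n) (T : ℕ → ℕ → ℕ) (l k j i : ℕ) : ℕ :=
  if j = l then k
  else
    T (((scanPath lam T j i).filter fun h => decide (h < l)).foldr max 0)
      (remnant lam T j i (((scanPath lam T j i).filter fun h => decide (h < l)).foldr max 0))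

/-- The set `B_λ(T, π; l, k) = ⋂_{j=1}^{l} ⋃_{i=a(j)}^{b(j)-1} [E(l,k;j,i), Y_λ(π)(j,i)]`. -/
def Bset (lam : NPartition n) (T : ℕ → ℕ → ℕ) (p : ℕ → ℕ) (l k : ℕ) : Set ℕ :=
  {v | ∀ j, 1 ≤ j → j ≤ l →
    ∃ i, aIdx lam T l k j ≤ i ∧ i + 1 ≤ bIdx lam T l k j ∧
      Epath lam T l k j i ≤ v ∧ v ≤ keyTab lam p j i}

/-! ### The left scanning method -/

/-- The largest row `r ≤ c j` of column `j` whose value is at most `x`. -/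
def maxRow (T : ℕ → ℕ → ℕ) (c : ℕ → ℕ) (j x : ℕ) : ℕ :=
  ((Finset.Icc 1 (c j)).filter fun r => T j r ≤ x).sup id

/-- The rows of the maximizing weakly decreasing sequence through columns
`j, j-1, …, 1` with initial bound `x`, in a remnant with column lengths `c`. -/
def leftRows (T : ℕ → ℕ → ℕ) (c : ℕ → ℕ) : ℕ → ℕ → List ℕ
  | 0, _ => []
  | j + 1, x => maxRow T c (j + 1) x :: leftRows T c j (T (j + 1) (maxRow T c (j + 1) x))

/-- The column-1 value at the end of the left scanning path originating at `(j, r)`. -/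
def leftEndVal (T : ℕ → ℕ → ℕ) (c : ℕ → ℕ) (j r : ℕ) : ℕ :=
  T 1 ((leftRows T c j (T j r)).getLastD 0)

/-- Remove the left scanning path originating at `(l, c l)`, together with
all values beneath it, from the remnant `c`. -/
def leftRemovePath (T : ℕ → ℕ → ℕ) (c : ℕ → ℕ) (l : ℕ) : ℕ → ℕ :=
  fun j =>
    if 1 ≤ j ∧ j ≤ l then (leftRows T c l (T l (c l))).getD (l - j) 0 - 1 else c j

/-- Iterate left-path removal `r` times (always for column `l`). -/
def leftRemnantIter (T : ℕ → ℕ → ℕ) (c0 : ℕ → ℕ) (l : ℕ) : ℕ → ℕ → ℕ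
  | 0 => c0
  | r + 1 => leftRemovePath T (leftRemnantIter T c0 l r) l

/-- Column lengths of the left remnant used to compute `M(T; l, i)`:
`T` restricted to its first `l` columns with the left scanning paths
originating at `(l, ζ_l), …, (l, i+1)` (and everything beneath them) removed. -/
def leftRemnant (lam : NPartition n) (T : ℕ → ℕ → ℕ) (l i : ℕ) : ℕ → ℕ :=
  leftRemnantIter T (zeta lam) l (zeta lam l - i)

/-- The left scanning value `M(T; l, i)`. -/
def leftScanValue (lam : NPartition n) (T : ℕ → ℕ → ℕ) (l i : ℕ) : ℕ :=
  leftEndVal T (leftRemnant lam T l i) l i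

/-! ### The condition sets F and G -/

/-- The set `F_λ(T, σ; l, k)`. -/
def Fset (lam : NPartition n) (T : ℕ → ℕ → ℕ) (sg : ℕ → ℕ) (l k : ℕ) : Set ℕ :=
  if l = 1 then Set.Icc (keyTab lam sg 1 k) (south lam T 1 k - 1)
  else
    let U := leftRemnant lam T l k
    let q := maxRow T U (l - 1) (south lam T l k - 1)
    let P := (Finset.Icc 1 q).filter fun h => keyTab lam sg l k ≤ leftEndVal T U (l - 1) h
    if hP : P.Nonempty then Set.Icc (T (l - 1) (P.min' hP)) (south lam T l k - 1)
    else (∅ : Set ℕ)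

/-- The set `G_λ(T, σ; l, k)`. -/
def Gset (lam : NPartition n) (T : ℕ → ℕ → ℕ) (sg : ℕ → ℕ) (l k : ℕ) : Set ℕ :=
  if l = 1 then {keyTab lam sg 1 k}
  else
    let U := leftRemnant lam T l k
    let q := maxRow T U (l - 1) (south lam T l k - 1)
    let P := (Finset.Icc 1 q).filter fun h => leftEndVal T U (l - 1) h = keyTab lam sg l k
    if hP : P.Nonempty then
      Set.Icc (T (l - 1) (P.min' hP))
        (min ((if P.max' hP + 1 ≤ U (l - 1) then T (l - 1) (P.max' hP + 1) else n + 1) - 1)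
          (south lam T l k - 1))
    else (∅ : Set ℕ)

/-! ### Polynomials, divided differences, words -/

/-- Polynomials in the variables `X 1, …, X n` (indexed by `ℕ`) over `ℚ`. -/
abbrev Poly : Type := MvPolynomial ℕ ℚ

/-- The action of `s_i` on polynomials: interchange `x_i` and `x_{i+1}`. -/
def sOp (i : ℕ) (P : Poly) : Poly := rename (Equiv.swap i (i + 1)) P

/-- The divided difference operator
`ρ_i = (x_i - x_{i+1})⁻¹ ∘ (1 - s_i) ∘ x_i`, defined as the unique polynomial
`Q` with `(x_i - x_{i+1}) Q = x_i P - s_i (x_i P)`. -/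
def rhoOp (i : ℕ) (P : Poly) : Poly :=
  if h : ∃ Q : Poly, (X i - X (i + 1)) * Q = X i * P - sOp i (X i * P) then h.choose
  else 0

/-- The operator `ρ̄_i := ρ_i - 1`. -/
def rhoBarOp (i : ℕ) (P : Poly) : Poly := rhoOp i P - P

/-- Apply operators indexed by a word `[i_t, …, i_1]`, rightmost first:
`applyOps f [i_t, …, i_1] P = f i_t (⋯ (f i_1 P))`. -/
def applyOps (f : ℕ → Poly → Poly) : List ℕ → Poly → Poly
  | [], P => P
  | i :: w, P => f i (applyOps f w P)

/-- The monomial `x_1^{λ_1} ⋯ x_n^{λ_n}`. -/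
def lamMonomial (lam : NPartition n) : Poly :=
  ∏ i ∈ Finset.Icc 1 n, X i ^ lam.part i

/-- The weight monomial `x^T = ∏ x_i^{c_i}` of the filling `T`. -/
def weight (lam : NPartition n) (T : ℕ → ℕ → ℕ) : Poly :=
  ∏ b ∈ boxes lam, X (T b.1 b.2)

/-- The simple reflection `s_i` acting by value. -/
def swapVal (i v : ℕ) : ℕ := if v = i then i + 1 else if v = i + 1 then i else v

/-- The permutation `s_{i_t} ⋯ s_{i_1}.(1, 2, …, n)` obtained by applying the
word `w = [i_t, …, i_1]` (rightmost letter first, each acting by value) to the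
identity. -/
def permOfWord (w : List ℕ) : ℕ → ℕ := w.foldr (fun i f => swapVal i ∘ f) id

/-- `w` is a word in letters `s_1, …, s_{n-1}` producing `π` from `(1, …, n)`. -/
def WordFor (n : ℕ) (w : List ℕ) (p : ℕ → ℕ) : Prop :=
  (∀ i ∈ w, 1 ≤ i ∧ i + 1 ≤ n) ∧ ∀ t, 1 ≤ t → t ≤ n → permOfWord w t = p t

/-- `w` is a reduced word for `π`: it produces `π` with minimal length. -/
def IsReducedWord (n : ℕ) (w : List ℕ) (p : ℕ → ℕ) : Prop :=
  WordFor n w p ∧ ∀ w' : List ℕ, WordFor n w' p → w.length ≤ w'.length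

/-- The atom `c_λ(π;x) = ρ̄_{i_t} ⋯ ρ̄_{i_1} . x_1^{λ_1} ⋯ x_n^{λ_n}`, computed
from a choice of reduced word for `π` (it is independent of this choice). -/
def atomPoly (lam : NPartition n) (p : ℕ → ℕ) : Poly :=
  if h : ∃ w : List ℕ, IsReducedWord n w p then
    applyOps rhoBarOp h.choose (lamMonomial lam)
  else 0

/-! ### `S_n^λ` -/

/-- The set `Q_λ` of distinct column lengths of `λ`. -/
def Qset (lam : NPartition n) : Finset ℕ := (Finset.Icc 1 (lam.part 1)).image (zeta lam)

/-- `π ∈ S_n^λ`: an `n`-permutation increasing on each block `[q_{r-1}+1, q_r]`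
cut out by the column lengths of `λ` (equivalently, `π_i < π_j` whenever
`i < j` and no element of `Q_λ` lies in `[i, j)`). -/
def InSnLam (lam : NPartition n) (p : ℕ → ℕ) : Prop :=
  IsNPerm n p ∧ ∀ i j, 1 ≤ i → i < j → j ≤ n →
    (∀ q ∈ Qset lam, q < i ∨ j ≤ q) → p i < p j

end KeyPoly

namespace KeyPoly

variable {n : ℕ}

lemma zeta_le (lam : NPartition n) (j : ℕ) : zeta lam j ≤ n := by
  calc zeta lam j ≤ (Finset.Icc 1 n).card := Finset.card_filter_le _ _
  _ = n := by simp


lemma zeta_antitone (lam : NPartition n) {j j' : ℕ} (h : j ≤ j') :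
    zeta lam j' ≤ zeta lam j := by
  apply Finset.card_le_card
  intro i hi
  simp only [Finset.mem_filter] at *
  exact ⟨hi.1, le_trans h hi.2⟩


lemma le_zeta_iff (lam : NPartition n) {i : ℕ} (hi1 : 1 ≤ i) (hin : i ≤ n) (j : ℕ) :
    i ≤ zeta lam j ↔ j ≤ lam.part i := by
  constructor
  · intro h
    by_contra hc
    push_neg at hc
    have hsub : (Finset.Icc 1 n).filter (fun t => j ≤ lam.part t) ⊆ Finset.Icc 1 (i - 1) := by
      intro t ht
      simp only [Finset.mem_filter, Finset.mem_Icc] at *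
      refine ⟨ht.1.1, ?_⟩
      by_contra hti
      push_neg at hti
      have : lam.part t ≤ lam.part i := lam.antitone hi1 (by omega)
      omega
    have hcard := Finset.card_le_card hsub
    simp only [Nat.card_Icc] at hcard
    unfold zeta at h
    omega
  · intro h
    have hsub : Finset.Icc 1 i ⊆ (Finset.Icc 1 n).filter (fun t => j ≤ lam.part t) := by
      intro t ht
      simp only [Finset.mem_Icc, Finset.mem_filter] at *
      exact ⟨⟨ht.1, le_trans ht.2 hin⟩, le_trans h (lam.antitone ht.1 ht.2)⟩
    have hcard := Finset.card_le_card hsub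
    unfold zeta
    simp only [Nat.card_Icc] at hcard
    omega


lemma inShape_of (lam : NPartition n) {j i : ℕ} (hj : 1 ≤ j) (hi : 1 ≤ i)
    (hiz : i ≤ zeta lam j) : InShape lam j i := by
  have hin : i ≤ n := le_trans hiz (zeta_le lam j)
  exact ⟨hj, hi, hin, (le_zeta_iff lam hi hin j).1 hiz⟩


lemma inShape_zeta (lam : NPartition n) {j i : ℕ} (h : InShape lam j i) : i ≤ zeta lam j :=
  (le_zeta_iff lam h.2.1 h.2.2.1 j).2 h.2.2.2


lemma col_lt {lam : NPartition n} {T : ℕ → ℕ → ℕ} (hT : IsSSYT lam T) {j i i' : ℕ}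
    (hj : 1 ≤ j) (hi : 1 ≤ i) (hii : i < i') (hiz : i' ≤ zeta lam j) : T j i < T j i' := by
  obtain ⟨m, rfl⟩ : ∃ m, i' = i + m + 1 := ⟨i' - i - 1, by omega⟩
  clear hii
  induction m with
  | zero => exact hT.2.2 j i (inShape_of lam hj (by omega) hiz)
  | succ m ih =>
      have h1 : T j i < T j (i + m + 1) := ih (by omega)
      have h2 : T j (i + m + 1) < T j (i + m + 1 + 1) :=
        hT.2.2 j (i + m + 1) (inShape_of lam hj (by omega) (by omega))
      have he : i + (m + 1) + 1 = i + m + 1 + 1 := by omega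
      rw [he]
      omega


lemma col_le {lam : NPartition n} {T : ℕ → ℕ → ℕ} (hT : IsSSYT lam T) {j i i' : ℕ}
    (hj : 1 ≤ j) (hi : 1 ≤ i) (hii : i ≤ i') (hiz : i' ≤ zeta lam j) : T j i ≤ T j i' := by
  rcases eq_or_lt_of_le hii with rfl | h
  · exact le_refl _
  · exact le_of_lt (col_lt hT hj hi h hiz)


lemma maxRow_le (T : ℕ → ℕ → ℕ) (c : ℕ → ℕ) (j x : ℕ) : maxRow T c j x ≤ c j := by
  apply Finset.sup_le
  intro r hr
  simp only [Finset.mem_filter, Finset.mem_Icc] at hr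
  exact hr.1.2


lemma le_maxRow {T : ℕ → ℕ → ℕ} {c : ℕ → ℕ} {j x r : ℕ} (h1 : 1 ≤ r) (h2 : r ≤ c j)
    (h3 : T j r ≤ x) : r ≤ maxRow T c j x :=
  Finset.le_sup (f := id) (by simp only [Finset.mem_filter, Finset.mem_Icc]; exact ⟨⟨h1, h2⟩, h3⟩)


lemma maxRow_mono {T : ℕ → ℕ → ℕ} {c : ℕ → ℕ} {j x x' : ℕ} (h : x ≤ x') :
    maxRow T c j x ≤ maxRow T c j x' := by
  apply Finset.sup_mono
  intro r hr
  simp only [Finset.mem_filter, Finset.mem_Icc] at *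
  exact ⟨hr.1, le_trans hr.2 h⟩


lemma maxRow_spec {T : ℕ → ℕ → ℕ} {c : ℕ → ℕ} {j x : ℕ} (h : 1 ≤ maxRow T c j x) :
    maxRow T c j x ≤ c j ∧ T j (maxRow T c j x) ≤ x := by
  refine ⟨maxRow_le T c j x, ?_⟩
  set S := (Finset.Icc 1 (c j)).filter fun r => T j r ≤ x with hS
  have hne : S.Nonempty := by
    by_contra hc
    rw [Finset.not_nonempty_iff_eq_empty] at hc
    unfold maxRow at h
    rw [← hS, hc] at h
    simp at h
  obtain ⟨b, hb, heq⟩ := Finset.exists_mem_eq_sup S hne id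
  have : maxRow T c j x = b := heq
  rw [this]
  exact (Finset.mem_filter.1 hb).2



/-- maxRow at the bound given by an in-remnant box is that box's row. -/
lemma maxRow_fix {lam : NPartition n} {T : ℕ → ℕ → ℕ} (hT : IsSSYT lam T)
    {c : ℕ → ℕ} {j r : ℕ} (hj : 1 ≤ j) (hcz : c j ≤ zeta lam j)
    (h1 : 1 ≤ r) (h2 : r ≤ c j) : maxRow T c j (T j r) = r := by
  refine le_antisymm ?_ (le_maxRow h1 h2 (le_refl _))
  apply Finset.sup_le
  intro b hb
  simp only [Finset.mem_filter, Finset.mem_Icc] at hb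
  by_contra hc
  push_neg at hc
  have : T j r < T j b := col_lt hT hj h1 hc (le_trans hb.1.2 hcz)
  omega


lemma maxRow_idem {T : ℕ → ℕ → ℕ} {c : ℕ → ℕ} {j x : ℕ} (h : 1 ≤ maxRow T c j x) :
    maxRow T c j (T j (maxRow T c j x)) = maxRow T c j x := by
  obtain ⟨hle, hval⟩ := maxRow_spec h
  refine le_antisymm ?_ (le_maxRow h hle (le_refl _))
  apply Finset.sup_le
  intro b hb
  simp only [Finset.mem_filter, Finset.mem_Icc] at hb
  exact le_maxRow hb.1.1 hb.1.2 (le_trans hb.2 hval)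


/-- Restart: a path equals the path started at its own first box. -/
lemma leftRows_restart {T : ℕ → ℕ → ℕ} {c : ℕ → ℕ} {j x : ℕ} (hj : 1 ≤ j)
    (h : 1 ≤ maxRow T c j x) :
    leftRows T c j x = leftRows T c j (T j (maxRow T c j x)) := by
  obtain ⟨m, rfl⟩ : ∃ m, j = m + 1 := ⟨j - 1, by omega⟩
  show (leftRows T c (m+1) x) = _
  simp only [leftRows]
  rw [maxRow_idem h]


lemma chain_mono {f : ℕ → ℕ} {m : ℕ} (h : ∀ i, i < m → f i ≤ f (i + 1)) :
    ∀ i i', i ≤ i' → i' ≤ m → f i ≤ f i' := by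
  intro i i' hii him
  obtain ⟨d, rfl⟩ : ∃ d, i' = i + d := ⟨i' - i, by omega⟩
  clear hii
  induction d with
  | zero => exact le_refl _
  | succ d ih => exact le_trans (ih (by omega)) (h (i + d) (by omega))


/-- Main properties of a left scanning path started at box `(j+1, b)`. -/
lemma path_props {lam : NPartition n} {T : ℕ → ℕ → ℕ} (hT : IsSSYT lam T) {l : ℕ}
    {c : ℕ → ℕ} (hcz : ∀ j, c j ≤ zeta lam j)
    (hmono : ∀ j j', 1 ≤ j → j ≤ j' → j' ≤ l → c j' ≤ c j) :
    ∀ j b, 1 ≤ b → b ≤ c (j + 1) → j + 1 ≤ l →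
      (leftRows T c (j + 1) (T (j + 1) b)).length = j + 1 ∧
      (leftRows T c (j + 1) (T (j + 1) b)).getD 0 0 = b ∧
      (∀ i, i < j → (leftRows T c (j + 1) (T (j + 1) b)).getD i 0 ≤
        (leftRows T c (j + 1) (T (j + 1) b)).getD (i + 1) 0) ∧
      (∀ i, i ≤ j → 1 ≤ (leftRows T c (j + 1) (T (j + 1) b)).getD i 0 ∧
        (leftRows T c (j + 1) (T (j + 1) b)).getD i 0 ≤ c (j + 1 - i)) := by
  intro j
  induction j with
  | zero =>
      intro b hb1 hbc hl
      have hfix : maxRow T c 1 (T 1 b) = b := maxRow_fix hT le_rfl (hcz 1) hb1 hbc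
      simp only [leftRows, hfix]
      refine ⟨rfl, rfl, by omega, ?_⟩
      intro i hi
      interval_cases i
      simpa using ⟨hb1, hbc⟩
  | succ j ih =>
      intro b hb1 hbc hl
      have hfix : maxRow T c (j + 2) (T (j + 2) b) = b :=
        maxRow_fix hT (by omega) (hcz (j + 2)) hb1 hbc
      have hbc1 : b ≤ c (j + 1) := le_trans hbc (hmono (j + 1) (j + 2) (by omega) (by omega) hl)
      have hrow : T (j + 1) b ≤ T (j + 2) b :=
        hT.2.1 (j + 1) b (inShape_of lam (by omega) hb1 (le_trans hbc (hcz (j + 2))))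
      set ρ := maxRow T c (j + 1) (T (j + 2) b) with hρ
      have hρ1 : b ≤ ρ := le_maxRow hb1 hbc1 hrow
      have hρc : ρ ≤ c (j + 1) := maxRow_le T c (j + 1) _
      have hrestart : leftRows T c (j + 1) (T (j + 2) b) =
          leftRows T c (j + 1) (T (j + 1) ρ) := leftRows_restart (by omega) (by omega)
      have hL : leftRows T c (j + 2) (T (j + 2) b) =
          b :: leftRows T c (j + 1) (T (j + 1) ρ) := by
        conv_lhs => rw [leftRows]
        rw [show maxRow T c (j + 1 + 1) (T (j + 1 + 1) b) = b by
              rw [show j + 1 + 1 = j + 2 from rfl]; exact hfix]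
        rw [show j + 1 + 1 = j + 2 from rfl, hrestart]
      obtain ⟨ihlen, ihhead, ihmono, ihbd⟩ := ih ρ (by omega) hρc (by omega)
      rw [hL]
      refine ⟨by simp [ihlen], by simp, ?_, ?_⟩
      · intro i hi
        rcases Nat.eq_zero_or_pos i with rfl | hipos
        · simp only [List.getD_cons_zero, List.getD_cons_succ]
          rw [ihhead]; exact hρ1
        · obtain ⟨i', rfl⟩ : ∃ i', i = i' + 1 := ⟨i - 1, by omega⟩
          simp only [List.getD_cons_succ]
          exact ihmono i' (by omega)
      · intro i hi
        rcases Nat.eq_zero_or_pos i with rfl | hipos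
        · simp only [List.getD_cons_zero]
          exact ⟨hb1, by simpa using hbc⟩
        · obtain ⟨i', rfl⟩ : ∃ i', i = i' + 1 := ⟨i - 1, by omega⟩
          simp only [List.getD_cons_succ]
          have hb' := ihbd i' (by omega)
          refine ⟨hb'.1, ?_⟩
          have : j + 1 - i' = j + 2 - (i' + 1) := by omega
          rw [← this]
          exact hb'.2



/-- Invariants of the iterated left remnant. -/
lemma remnantIter_props {lam : NPartition n} {T : ℕ → ℕ → ℕ} (hT : IsSSYT lam T)
    {l k : ℕ} (hl : 1 ≤ l) (hk1 : 1 ≤ k) (hkz : k ≤ zeta lam l) :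
    ∀ r, r ≤ zeta lam l - k →
      (∀ j, leftRemnantIter T (zeta lam) l r j ≤ zeta lam j) ∧
      (∀ j j', 1 ≤ j → j ≤ j' → j' ≤ l →
        leftRemnantIter T (zeta lam) l r j' ≤ leftRemnantIter T (zeta lam) l r j) ∧
      leftRemnantIter T (zeta lam) l r l = zeta lam l - r := by
  intro r
  induction r with
  | zero =>
      intro _
      exact ⟨fun j => le_rfl, fun j j' _ h2 _ => zeta_antitone lam h2, by simp [leftRemnantIter]⟩
  | succ r ih =>
      intro hr
      obtain ⟨hcz, hcmono, hcl⟩ := ih (by omega)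
      set c := leftRemnantIter T (zeta lam) l r with hc
      have hcl1 : 1 ≤ c l := by omega
      obtain ⟨m, rfl⟩ : ∃ m, l = m + 1 := ⟨l - 1, by omega⟩
      obtain ⟨hlen, hhead, hadj, hbd⟩ :=
        path_props hT hcz hcmono m (c (m + 1)) hcl1 le_rfl le_rfl
      set L := leftRows T c (m + 1) (T (m + 1) (c (m + 1))) with hL
      have hstep : leftRemnantIter T (zeta lam) (m + 1) (r + 1) =
          leftRemovePath T c (m + 1) := rfl
      rw [hstep]
      have hval : ∀ j, 1 ≤ j → j ≤ m + 1 →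
          leftRemovePath T c (m + 1) j = L.getD (m + 1 - j) 0 - 1 := by
        intro j h1 h2
        simp only [leftRemovePath, if_pos (And.intro h1 h2)]
        rfl
      refine ⟨?_, ?_, ?_⟩
      · intro j
        by_cases hj : 1 ≤ j ∧ j ≤ m + 1
        · rw [hval j hj.1 hj.2]
          have hb := (hbd (m + 1 - j) (by omega)).2
          have hidx : m + 1 - (m + 1 - j) = j := by omega
          rw [hidx] at hb
          have := hcz j
          omega
        · simp only [leftRemovePath, if_neg hj]
          exact hcz j
      · intro j j' h1 h2 h3
        rw [hval j h1 (by omega), hval j' (by omega) h3]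
        have hmono' : L.getD (m + 1 - j') 0 ≤ L.getD (m + 1 - j) 0 :=
          chain_mono (m := m) (fun i hi => hadj i hi) _ _ (by omega) (by omega)
        omega
      · rw [hval (m + 1) (by omega) le_rfl]
        simp only [Nat.sub_self]
        rw [hhead]
        omega


/-- The recursion for `leftEndVal` along the scanning path. -/
lemma leftEndVal_rec {lam : NPartition n} {T : ℕ → ℕ → ℕ} (hT : IsSSYT lam T)
    {l : ℕ} {U : ℕ → ℕ} (hUz : ∀ j, U j ≤ zeta lam j)
    (hUmono : ∀ j j', 1 ≤ j → j ≤ j' → j' ≤ l → U j' ≤ U j)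
    {j r : ℕ} (hj : 1 ≤ j) (hjl : j + 1 ≤ l) (h1 : 1 ≤ r) (h2 : r ≤ U (j + 1)) :
    1 ≤ maxRow T U j (T (j + 1) r) ∧ maxRow T U j (T (j + 1) r) ≤ U j ∧
      leftEndVal T U (j + 1) r = leftEndVal T U j (maxRow T U j (T (j + 1) r)) := by
  have hrUj : r ≤ U j := le_trans h2 (hUmono j (j + 1) hj (by omega) hjl)
  have hrow : T j r ≤ T (j + 1) r :=
    hT.2.1 j r (inShape_of lam (by omega) h1 (le_trans h2 (hUz (j + 1))))
  have hρ1 : 1 ≤ maxRow T U j (T (j + 1) r) := le_trans h1 (le_maxRow h1 hrUj hrow)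
  refine ⟨hρ1, maxRow_le T U j _, ?_⟩
  have hfix : maxRow T U (j + 1) (T (j + 1) r) = r :=
    maxRow_fix hT (by omega) (hUz (j + 1)) h1 h2
  have hre : leftRows T U j (T (j + 1) r) =
      leftRows T U j (T j (maxRow T U j (T (j + 1) r))) := leftRows_restart hj hρ1
  have hLcons : leftRows T U (j + 1) (T (j + 1) r) =
      r :: leftRows T U j (T j (maxRow T U j (T (j + 1) r))) := by
    conv_lhs => rw [leftRows]
    rw [hfix, hre]
  unfold leftEndVal
  rw [hLcons]
  obtain ⟨m, rfl⟩ : ∃ m, j = m + 1 := ⟨j - 1, by omega⟩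
  simp only [leftRows, List.getLastD_cons]


/-- In column 1, the end value is the value itself. -/
lemma leftEndVal_one {lam : NPartition n} {T : ℕ → ℕ → ℕ} (hT : IsSSYT lam T)
    {U : ℕ → ℕ} (hUz : ∀ j, U j ≤ zeta lam j) {r : ℕ} (h1 : 1 ≤ r) (h2 : r ≤ U 1) :
    leftEndVal T U 1 r = T 1 r := by
  have hfix : maxRow T U 1 (T 1 r) = r := maxRow_fix hT le_rfl (hUz 1) h1 h2
  unfold leftEndVal
  rw [show (1 : ℕ) = 0 + 1 from rfl]
  simp only [leftRows, hfix, List.getLastD_cons, List.getLastD_nil]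


/-- Monotonicity of the end value in the starting row. -/
lemma leftEndVal_mono {lam : NPartition n} {T : ℕ → ℕ → ℕ} (hT : IsSSYT lam T)
    {l : ℕ} {U : ℕ → ℕ} (hUz : ∀ j, U j ≤ zeta lam j)
    (hUmono : ∀ j j', 1 ≤ j → j ≤ j' → j' ≤ l → U j' ≤ U j) :
    ∀ j, 1 ≤ j → j ≤ l → ∀ r r', 1 ≤ r → r ≤ r' → r' ≤ U j →
      leftEndVal T U j r ≤ leftEndVal T U j r' := by
  intro j
  induction j with
  | zero => omega
  | succ j ih =>
      intro _ hjl r r' h1 hrr h2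
      rcases Nat.eq_zero_or_pos j with rfl | hj1
      · have h2' : r' ≤ U 1 := h2
        show leftEndVal T U 1 r ≤ leftEndVal T U 1 r'
        rw [leftEndVal_one hT hUz h1 (le_trans hrr h2'), leftEndVal_one hT hUz (by omega) h2']
        exact col_le hT le_rfl h1 hrr (le_trans h2' (hUz 1))
      · obtain ⟨ha1, ha2, ha3⟩ :=
          leftEndVal_rec hT hUz hUmono hj1 hjl (show 1 ≤ r' by omega) h2
        obtain ⟨hb1, hb2, hb3⟩ :=
          leftEndVal_rec hT hUz hUmono hj1 hjl h1 (le_trans hrr h2)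
        rw [hb3, ha3]
        have hTr : T (j + 1) r ≤ T (j + 1) r' :=
          col_le hT (by omega) h1 hrr (le_trans h2 (hUz (j + 1)))
        exact ih hj1 (by omega) _ _ hb1 (maxRow_mono hTr) ha2



lemma south_gt {lam : NPartition n} {T : ℕ → ℕ → ℕ} (hT : IsSSYT lam T) {l k : ℕ}
    (hbox : InShape lam l k) : T l k < south lam T l k := by
  unfold south
  split
  · next h => exact hT.2.2 l k h
  · have := (hT.1 l k hbox).2
    omega


lemma box_iff {lam : NPartition n} {T : ℕ → ℕ → ℕ} (hT : IsSSYT lam T) (sg : ℕ → ℕ)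
    {l k : ℕ} (hbox : InShape lam l k) :
    keyTab lam sg l k ≤ leftScanValue lam T l k ↔ T l k ∈ Fset lam T sg l k := by
  have hl1 : 1 ≤ l := hbox.1
  have hk1 : 1 ≤ k := hbox.2.1
  have hkz : k ≤ zeta lam l := inShape_zeta lam hbox
  obtain ⟨hUz, hUmono, hUl'⟩ := remnantIter_props hT hl1 hk1 hkz (zeta lam l - k) le_rfl
  have hU : leftRemnant lam T l k = leftRemnantIter T (zeta lam) l (zeta lam l - k) := rfl
  set U := leftRemnant lam T l k with hUdef
  rw [← hU] at hUz hUmono hUl'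
  have hUl : U l = k := by rw [hUl']; omega
  have hsouth : T l k < south lam T l k := south_gt hT hbox
  have hM : leftScanValue lam T l k = leftEndVal T U l k := rfl
  rcases eq_or_ne l 1 with rfl | hne
  · -- column 1
    have hMv : leftScanValue lam T 1 k = T 1 k := by
      rw [hM, leftEndVal_one hT hUz hk1 (le_of_eq hUl.symm)]
    rw [hMv]
    unfold Fset
    rw [if_pos rfl]
    rw [Set.mem_Icc]
    constructor
    · intro h
      exact ⟨h, by omega⟩
    · intro h
      exact h.1
  · -- l ≥ 2
    have hl2 : 2 ≤ l := by omega
    have hll : l - 1 + 1 = l := by omega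
    -- the recursion at the first step
    have hkU : k ≤ U (l - 1 + 1) := by rw [hll, hUl]
    obtain ⟨hh1, hh2, hh3⟩ :=
      leftEndVal_rec hT hUz hUmono (j := l - 1) (by omega) (by omega) hk1 hkU
    rw [hll] at hh1 hh2 hh3
    set h0 := maxRow T U (l - 1) (T l k) with hh0
    set s := south lam T l k with hs
    set K := keyTab lam sg l k with hK
    set q := maxRow T U (l - 1) (s - 1) with hq
    set P := (Finset.Icc 1 q).filter fun h => K ≤ leftEndVal T U (l - 1) h with hP
    have hFs : Fset lam T sg l k =
        if hp : P.Nonempty then Set.Icc (T (l - 1) (P.min' hp)) (s - 1) else (∅ : Set ℕ) := by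
      unfold Fset
      rw [if_neg hne]
    have hh0q : h0 ≤ q := by
      rw [hh0, hq]
      exact maxRow_mono (by omega)
    rw [hM, hh3, hFs]
    constructor
    · intro hKM
      have hmem : h0 ∈ P :=
        Finset.mem_filter.2 ⟨Finset.mem_Icc.2 ⟨hh1, hh0q⟩, hKM⟩
      have hpne : P.Nonempty := ⟨h0, hmem⟩
      rw [dif_pos hpne, Set.mem_Icc]
      obtain ⟨hmIcc, hmKey⟩ := Finset.mem_filter.1 (P.min'_mem hpne)
      obtain ⟨hm1, hmq⟩ := Finset.mem_Icc.1 hmIcc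
      have hminle : P.min' hpne ≤ h0 := P.min'_le h0 hmem
      have hTh0 : T (l - 1) h0 ≤ T l k := by
        have := (maxRow_spec (x := T l k) (by rw [← hh0]; exact hh1)).2
        rw [← hh0] at this
        exact this
      have hcol : T (l - 1) (P.min' hpne) ≤ T (l - 1) h0 :=
        col_le hT (by omega) hm1 hminle (le_trans hh2 (hUz (l - 1)))
      exact ⟨le_trans hcol hTh0, by omega⟩
    · intro hmem
      by_cases hpne : P.Nonempty
      swap
      · rw [dif_neg hpne] at hmem
        exact absurd hmem (Set.notMem_empty _)
      rw [dif_pos hpne, Set.mem_Icc] at hmem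
      obtain ⟨hpIcc, hKp⟩ := Finset.mem_filter.1 (P.min'_mem hpne)
      obtain ⟨hp1, hpq⟩ := Finset.mem_Icc.1 hpIcc
      have hpU : P.min' hpne ≤ U (l - 1) := le_trans hpq (by rw [hq]; exact maxRow_le _ _ _ _)
      have hph : P.min' hpne ≤ h0 := by
        rw [hh0]
        exact le_maxRow hp1 hpU hmem.1
      have hmono := leftEndVal_mono hT hUz hUmono (l - 1) (by omega) (by omega)
        (P.min' hpne) h0 hp1 hph hh2
      exact le_trans hKp hmono



/-- Theorem 9.1.  `M(T) ≥ Y_λ(σ)` iff every entry of `T`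
lies in the corresponding set `F_λ(T, σ; l, k)`. -/
theorem leftScan_ge_key_iff_Fset (n : ℕ) (hn : 1 ≤ n) (lam : NPartition n)
    (sg : ℕ → ℕ) (hsg : IsNPerm n sg) (T : ℕ → ℕ → ℕ) (hT : IsSSYT lam T) :
    (∀ l k, InShape lam l k → keyTab lam sg l k ≤ leftScanValue lam T l k) ↔
      (∀ l k, InShape lam l k → T l k ∈ Fset lam T sg l k) := by
  constructor
  · intro H l k h
    exact (box_iff hT sg h).1 (H l k h)
  · intro H l k h
    exact (box_iff hT sg h).2 (H l k h)

end KeyPoly
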